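/- Let k ≥ 0 be an integer and κ > 0. If α > 0 with α ≠ √κ is a common root of F_k and F_{k+1}, then there exist distinct positive integers m ≠ n such that either α = j_{k,n} and κ/α = j_{k,m}, or α = j_{k+1,n} and κ/α = j_{k+1,m}. Conversely, each such α is a common root of F_k and F_{k+1}. -/

import Mathlib

open Real Set

/-- Bessel function of the first kind of integer order `k`, defined by its power series. -/
noncomputable def besselJ (k : ℕ) (x : ℝ) : ℝ :=
  ∑' m : ℕ, ((-1 : ℝ) ^ m / ((Nat.factorial m : ℝ) * (Nat.factorial (m + k) : ℝ))) *
    (x / 2) ^ (2 * m + k)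

noncomputable def bC (k m : ℕ) : ℝ :=
  (-1 : ℝ) ^ m / ((Nat.factorial m : ℝ) * (Nat.factorial (m + k) : ℝ))

noncomputable def bT (k : ℕ) (x : ℝ) (m : ℕ) : ℝ := bC k m * (x / 2) ^ (2 * m + k)

noncomputable def bD (k : ℕ) (x : ℝ) (m : ℕ) : ℝ :=
  bC k m * (((2 * m + k : ℕ) : ℝ) * (x / 2) ^ (2 * m + k - 1) * (1 / 2))

lemma besselJ_eq (k : ℕ) (x : ℝ) : besselJ k x = ∑' m, bT k x m := rfl

lemma abs_bC (k m : ℕ) :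
    |bC k m| = 1 / ((Nat.factorial m : ℝ) * (Nat.factorial (m + k) : ℝ)) := by
  have h1 : (0:ℝ) < (Nat.factorial m : ℝ) * (Nat.factorial (m + k) : ℝ) := by positivity
  rw [bC, abs_div, abs_pow, abs_neg, abs_one, one_pow, abs_of_pos h1]

lemma abs_bC_le (k m : ℕ) : |bC k m| ≤ 1 / (Nat.factorial m : ℝ) := by
  rw [abs_bC]
  have h1 : (1:ℝ) ≤ (Nat.factorial (m + k) : ℝ) := by
    exact_mod_cast Nat.one_le_iff_ne_zero.mpr (Nat.factorial_ne_zero _)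
  have h2 : (0:ℝ) < (Nat.factorial m : ℝ) := by positivity
  rw [div_le_div_iff₀ (by positivity) h2]
  nlinarith

lemma bC_succ (k m : ℕ) : bC (k + 1) m * ((m : ℝ) + k + 1) = bC k m := by
  rw [bC, bC]
  have h : (m + (k+1)).factorial = (m + k + 1) * (m + k).factorial := by
    rw [show m + (k+1) = (m + k) + 1 by ring, Nat.factorial_succ]
  rw [h]
  have hf1 : (0:ℝ) < (Nat.factorial m : ℝ) := by positivity
  have hf2 : (0:ℝ) < (Nat.factorial (m+k) : ℝ) := by positivity
  have h3 : (0:ℝ) < (m:ℝ) + k + 1 := by positivity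
  push_cast
  field_simp

lemma bC_shift (k m : ℕ) : bC k (m + 1) * ((m : ℝ) + 1) = - bC (k + 1) m := by
  rw [bC, bC]
  have h : (m + 1).factorial = (m + 1) * m.factorial := Nat.factorial_succ m
  have h2 : m + 1 + k = m + (k + 1) := by ring
  rw [h, h2, pow_succ]
  have hf1 : (0:ℝ) < (Nat.factorial m : ℝ) := by positivity
  have hf2 : (0:ℝ) < (Nat.factorial (m+(k+1)) : ℝ) := by positivity
  push_cast
  field_simp

lemma hasDerivAt_bT (k m : ℕ) (x : ℝ) : HasDerivAt (fun y => bT k y m) (bD k x m) x := by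
  have h : HasDerivAt (fun y : ℝ => (y / 2) ^ (2 * m + k))
      (((2 * m + k : ℕ) : ℝ) * (x / 2) ^ (2 * m + k - 1) * (1 / 2)) x := by
    simpa using ((hasDerivAt_id x).div_const 2).fun_pow (2 * m + k)
  simpa [bT, bD, mul_assoc] using h.const_mul (bC k m)

/-- the summable bound -/
noncomputable def bU (k : ℕ) (B : ℝ) (m : ℕ) : ℝ := (2 * B) ^ (2 * m + k) / (Nat.factorial m : ℝ)

lemma bU_summable (k : ℕ) (B : ℝ) : Summable (bU k B) := by
  have h : Summable (fun m : ℕ => (2 * B) ^ k * (((2 * B) ^ 2) ^ m / (Nat.factorial m : ℝ))) :=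
    (Real.summable_pow_div_factorial ((2 * B) ^ 2)).mul_left _
  refine h.congr fun m => ?_
  rw [← pow_mul, ← mul_div_assoc, ← pow_add, bU]
  ring_nf

lemma abs_half (x : ℝ) : |x / 2| = |x| / 2 := by
  rw [abs_div, abs_two]

lemma abs_bT_le (k : ℕ) {B x : ℝ} (hB : 1 ≤ B) (hx : |x| ≤ B) (m : ℕ) :
    |bT k x m| ≤ bU k B m := by
  have hB0 : (0:ℝ) < B := lt_of_lt_of_le one_pos hB
  have h1 : |x / 2| ≤ B := by
    rw [abs_half]; linarith [abs_nonneg x]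
  have h2 : |(x / 2) ^ (2 * m + k)| ≤ B ^ (2 * m + k) := by
    rw [abs_pow]; exact pow_le_pow_left₀ (abs_nonneg _) h1 _
  have h3 : B ^ (2*m+k) ≤ (2*B) ^ (2*m+k) :=
    pow_le_pow_left₀ hB0.le (by linarith) _
  have hfm : (0:ℝ) < (Nat.factorial m : ℝ) := by positivity
  rw [bT, abs_mul, bU]
  calc |bC k m| * |(x / 2) ^ (2 * m + k)|
      ≤ (1 / (Nat.factorial m : ℝ)) * (2*B) ^ (2 * m + k) :=
        mul_le_mul (abs_bC_le k m) (h2.trans h3) (abs_nonneg _) (by positivity)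
    _ = (2 * B) ^ (2 * m + k) / (Nat.factorial m : ℝ) := by ring

lemma abs_bD_le (k : ℕ) {B x : ℝ} (hB : 1 ≤ B) (hx : |x| ≤ B) (m : ℕ) :
    |bD k x m| ≤ bU k B m := by
  have hB0 : (0:ℝ) < B := lt_of_lt_of_le one_pos hB
  have h1 : |x / 2| ≤ B := by rw [abs_half]; linarith [abs_nonneg x]
  have h2 : |(x / 2) ^ (2 * m + k - 1)| ≤ B ^ (2 * m + k - 1) := by
    rw [abs_pow]; exact pow_le_pow_left₀ (abs_nonneg _) h1 _
  have h3 : B ^ (2*m+k-1) ≤ B ^ (2*m+k) := pow_le_pow_right₀ hB (Nat.sub_le _ _)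
  have h4 : ((2*m+k : ℕ) : ℝ) ≤ 2 ^ (2*m+k) := by
    exact_mod_cast (Nat.lt_two_pow_self (n := 2*m+k)).le
  have hfm : (0:ℝ) < (Nat.factorial m : ℝ) := by positivity
  have hBn : (0:ℝ) ≤ B ^ (2*m+k-1) := by positivity
  rw [bD, bU]
  rw [abs_mul, abs_mul, abs_mul]
  have hcast : |((2 * m + k : ℕ) : ℝ)| = ((2 * m + k : ℕ) : ℝ) := abs_of_nonneg (by positivity)
  rw [hcast]
  have key : ((2 * m + k : ℕ) : ℝ) * |(x / 2) ^ (2 * m + k - 1)| * |(1:ℝ) / 2|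
      ≤ 2 ^ (2*m+k) * B ^ (2*m+k) := by
    have : |(1:ℝ)/2| ≤ 1 := by rw [abs_of_pos]; norm_num; norm_num
    calc ((2 * m + k : ℕ) : ℝ) * |(x / 2) ^ (2 * m + k - 1)| * |(1:ℝ) / 2|
        ≤ 2 ^ (2*m+k) * B ^ (2*m+k) * 1 := by
          apply mul_le_mul _ this (abs_nonneg _) (by positivity)
          exact mul_le_mul h4 (h2.trans h3) (abs_nonneg _) (by positivity)
      _ = 2 ^ (2*m+k) * B ^ (2*m+k) := by ring
  calc |bC k m| * (((2 * m + k : ℕ) : ℝ) * |(x / 2) ^ (2 * m + k - 1)| * |(1:ℝ) / 2|)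
      ≤ (1 / (Nat.factorial m : ℝ)) * (2 ^ (2*m+k) * B ^ (2*m+k)) :=
        mul_le_mul (abs_bC_le k m) key (by positivity) (by positivity)
    _ = (2 * B) ^ (2 * m + k) / (Nat.factorial m : ℝ) := by rw [mul_pow]; ring

lemma bT_summable (k : ℕ) (x : ℝ) : Summable (fun m => bT k x m) := by
  have hB : (1:ℝ) ≤ |x| + 1 := by linarith [abs_nonneg x]
  exact Summable.of_norm_bounded (bU_summable k (|x|+1)) (fun m => by rw [Real.norm_eq_abs]; exact abs_bT_le k hB (by linarith) m)

lemma bD_summable (k : ℕ) (x : ℝ) : Summable (fun m => bD k x m) := by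
  have hB : (1:ℝ) ≤ |x| + 1 := by linarith [abs_nonneg x]
  exact Summable.of_norm_bounded (bU_summable k (|x|+1)) (fun m => by rw [Real.norm_eq_abs]; exact abs_bD_le k hB (by linarith) m)

noncomputable def bG (k : ℕ) (x : ℝ) : ℝ := ∑' m, bD k x m

lemma besselJ_hasDerivAt (k : ℕ) (x : ℝ) : HasDerivAt (besselJ k) (bG k x) x := by
  have hB : (1:ℝ) ≤ |x| + 1 := by linarith [abs_nonneg x]
  have hopen : IsOpen (Metric.ball (0:ℝ) (|x|+1)) := Metric.isOpen_ball
  have hconn : IsPreconnected (Metric.ball (0:ℝ) (|x|+1)) :=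
    (convex_ball _ _).isPreconnected
  have hx : x ∈ Metric.ball (0:ℝ) (|x|+1) := by
    simp [Real.dist_eq]
  have h0 : (0:ℝ) ∈ Metric.ball (0:ℝ) (|x|+1) := by
    simp [Real.dist_eq]; linarith [abs_nonneg x]
  have := hasDerivAt_tsum_of_isPreconnected (bU_summable k (|x|+1)) hopen hconn
    (g := fun m y => bT k y m) (g' := fun m y => bD k y m)
    (fun m y _ => hasDerivAt_bT k m y)
    (fun m y hy => by
      rw [Real.norm_eq_abs]
      apply abs_bD_le k hB
      simpa [Real.dist_eq] using le_of_lt (Metric.mem_ball.mp hy))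
    h0 (bT_summable k 0) hx
  exact this
lemma besselJ_continuous (k : ℕ) : Continuous (besselJ k) :=
  continuous_iff_continuousAt.mpr fun x => (besselJ_hasDerivAt k x).continuousAt

/-- termwise identity for `x J_{k+1}' = x J_k - (k+1) J_{k+1}` -/
lemma bD_term2 (k m : ℕ) {x : ℝ} (hx : x ≠ 0) :
    bD (k+1) x m = bT k x m - (((k:ℝ)+1)/x) * bT (k+1) x m := by
  have he : 2 * m + (k + 1) - 1 = 2 * m + k := by omega
  have he2 : 2 * m + (k + 1) = (2 * m + k) + 1 := by omega
  rw [bD, bT, bT, he, he2, pow_succ]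
  have hcoef : bC (k + 1) m * (((2 * m + (k+1) : ℕ) : ℝ) * (1/2))
      = bC k m - (((k:ℝ)+1)/2) * bC (k+1) m := by
    have h := bC_succ k m
    push_cast
    nlinarith [h]
  have hxhalf : (((k:ℝ)+1)/x) * (x/2) = ((k:ℝ)+1)/2 := by
    field_simp
  calc bC (k + 1) m * (((2 * m + (k+1) : ℕ) : ℝ) * (x/2) ^ (2*m+k) * (1 / 2))
      = (bC (k + 1) m * (((2 * m + (k+1) : ℕ) : ℝ) * (1/2))) * (x/2) ^ (2*m+k) := by ring
    _ = (bC k m - (((k:ℝ)+1)/2) * bC (k+1) m) * (x/2) ^ (2*m+k) := by rw [hcoef]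
    _ = bC k m * (x / 2) ^ (2 * m + k) - ((k:ℝ)+1)/x * (bC (k + 1) m * ((x / 2) ^ (2 * m + k) * (x/2))) := by
        rw [show ((k:ℝ)+1)/x * (bC (k + 1) m * ((x / 2) ^ (2 * m + k) * (x/2)))
          = (((k:ℝ)+1)/x * (x/2)) * (bC (k + 1) m * (x / 2) ^ (2 * m + k)) by ring, hxhalf]
        ring

lemma recur2 (k : ℕ) {x : ℝ} (hx : x ≠ 0) :
    bG (k+1) x = besselJ k x - (((k:ℝ)+1)/x) * besselJ (k+1) x := by
  rw [bG, besselJ_eq, besselJ_eq, ← tsum_mul_left, ← Summable.tsum_sub (bT_summable k x) ((bT_summable (k+1) x).mul_left _)]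
  exact tsum_congr fun m => bD_term2 k m hx

lemma recur1 (k : ℕ) {x : ℝ} (hx : x ≠ 0) :
    bG k x = ((k:ℝ)/x) * besselJ k x - besselJ (k+1) x := by
  have hsum : Summable (fun m => bD k x m - ((k:ℝ)/x) * bT k x m) :=
    (bD_summable k x).sub ((bT_summable k x).mul_left _)
  have key : bG k x - ((k:ℝ)/x) * besselJ k x = - besselJ (k+1) x := by
    rw [bG, besselJ_eq, ← tsum_mul_left,
      ← Summable.tsum_sub (bD_summable k x) ((bT_summable k x).mul_left _)]
    have h0 : bD k x 0 - ((k:ℝ)/x) * bT k x 0 = 0 := by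
      rcases Nat.eq_zero_or_pos k with hk | hk
      · subst hk; simp [bD, bT]
      · have he : 2 * 0 + k = (k - 1) + 1 := by omega
        rw [bD, bT, he, pow_succ]
        have hke : k - 1 + 1 = k := by omega
        rw [hke]
        have hrw : (k:ℝ)/x * (bC k 0 * ((x/2)^(k-1) * (x/2)))
            = bC k 0 * (((k:ℝ)/2) * (x/2)^(k-1)) := by
          field_simp
        rw [hrw]
        ring
    have hshift : ∀ m : ℕ, bD k x (m+1) - ((k:ℝ)/x) * bT k x (m+1) = - bT (k+1) x m := by
      intro m
      have he : 2 * (m+1) + k - 1 = (2 * m + (k+1)) := by omega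
      have he2 : 2 * (m+1) + k = (2 * m + (k+1)) + 1 := by omega
      rw [bD, bT, bT, he, he2, pow_succ]
      have hrw : (k:ℝ)/x * (bC k (m+1) * ((x/2)^(2*m+(k+1)) * (x/2)))
          = bC k (m+1) * (((k:ℝ)/2) * (x/2)^(2*m+(k+1))) := by
        field_simp
      rw [hrw]
      push_cast
      linear_combination ((x/2) ^ (2*m+(k+1))) * bC_shift k m
    rw [Summable.tsum_eq_zero_add hsum, h0, zero_add]
    calc ∑' m, (bD k x (m+1) - ((k:ℝ)/x) * bT k x (m+1))
        = ∑' m, - bT (k+1) x m := tsum_congr hshift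
      _ = - besselJ (k+1) x := by rw [tsum_neg, besselJ_eq]
  linarith [key]

lemma deriv_besselJ1 (k : ℕ) {x : ℝ} (hx : x ≠ 0) :
    deriv (besselJ k) x = ((k:ℝ)/x) * besselJ k x - besselJ (k+1) x := by
  rw [(besselJ_hasDerivAt k x).deriv, recur1 k hx]

lemma deriv_besselJ2 (k : ℕ) {x : ℝ} (hx : x ≠ 0) :
    deriv (besselJ (k+1)) x = besselJ k x - (((k:ℝ)+1)/x) * besselJ (k+1) x := by
  rw [(besselJ_hasDerivAt (k+1) x).deriv, recur2 k hx]
lemma besselJ_pos (k : ℕ) {x : ℝ} (h0 : 0 < x) (h1 : x ≤ 1) : 0 < besselJ k x := by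
  have hxh : 0 < x / 2 := by linarith
  have hxh1 : x / 2 ≤ 1 / 2 := by linarith
  set c : ℝ := (x / 2) ^ k / (Nat.factorial k : ℝ) with hc
  have hcpos : 0 < c := by positivity
  -- head term
  have hhead : bT k x 0 = c := by
    rw [bT, bC, hc]
    norm_num
    ring
  -- tail bound : |bT k x (m+1)| ≤ c * (1/4)^(m+1)
  have htail : ∀ m : ℕ, |bT k x (m + 1)| ≤ c * (1/4 : ℝ) ^ (m + 1) := by
    intro m
    rw [bT, abs_mul, abs_bC]
    have hfk : (Nat.factorial k : ℝ) ≤ (Nat.factorial (m + 1 + k) : ℝ) := by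
      exact_mod_cast Nat.factorial_le (by omega)
    have hf1 : (1:ℝ) ≤ (Nat.factorial (m + 1) : ℝ) := by
      exact_mod_cast Nat.one_le_iff_ne_zero.mpr (Nat.factorial_ne_zero _)
    have hb1 : 1 / ((Nat.factorial (m+1) : ℝ) * (Nat.factorial (m + 1 + k) : ℝ))
        ≤ 1 / (Nat.factorial k : ℝ) := by
      apply one_div_le_one_div_of_le (by positivity)
      have p1 : (0:ℝ) < (Nat.factorial (m+1+k) : ℝ) := by positivity
      have p2 : (0:ℝ) < (Nat.factorial k : ℝ) := by positivity
      nlinarith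
    have hpow : |(x/2) ^ (2 * (m+1) + k)| ≤ (x/2)^k * (1/4)^(m+1) := by
      rw [abs_of_pos (by positivity), show 2 * (m+1) + k = k + 2*(m+1) by ring, pow_add,
        pow_mul]
      have : ((x/2)^2) ^ (m+1) ≤ (1/4 : ℝ) ^ (m+1) := by
        apply pow_le_pow_left₀ (by positivity)
        nlinarith
      nlinarith [pow_pos hxh k, pow_nonneg (le_of_lt hxh) k,
        pow_pos (show (0:ℝ) < (x/2)^2 by positivity) (m+1)]
    calc 1 / ((Nat.factorial (m+1) : ℝ) * (Nat.factorial (m + 1 + k) : ℝ)) *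
          |(x/2) ^ (2 * (m+1) + k)|
        ≤ (1 / (Nat.factorial k : ℝ)) * ((x/2)^k * (1/4)^(m+1)) := by
          apply mul_le_mul hb1 hpow (abs_nonneg _) (by positivity)
      _ = c * (1/4)^(m+1) := by rw [hc]; ring
  have hgeo : Summable (fun m : ℕ => c * (1/4 : ℝ) ^ (m + 1)) := by
    apply Summable.mul_left
    exact (summable_geometric_of_lt_one (by norm_num) (by norm_num)).comp_injective
      (add_left_injective 1)
  have htsum_tail : |∑' m, bT k x (m + 1)| ≤ c * (1/3 : ℝ) := by
    have hs : Summable (fun m => ‖bT k x (m+1)‖) := by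
      apply Summable.of_nonneg_of_le (fun m => norm_nonneg _) (fun m => htail m) hgeo
    calc |∑' m, bT k x (m + 1)| ≤ ∑' m, ‖bT k x (m+1)‖ := norm_tsum_le_tsum_norm hs
      _ ≤ ∑' m : ℕ, c * (1/4 : ℝ) ^ (m + 1) := Summable.tsum_le_tsum (fun m => htail m) hs hgeo
      _ = c * ∑' m : ℕ, (1/4 : ℝ) ^ (m + 1) := tsum_mul_left
      _ = c * ((1/4) * ∑' m : ℕ, (1/4 : ℝ) ^ m) := by
          congr 1
          rw [← tsum_mul_left]
          exact tsum_congr fun m => by rw [pow_succ]; ring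
      _ = c * ((1/4) * (1 - 1/4)⁻¹) := by
          rw [tsum_geometric_of_lt_one (by norm_num) (by norm_num)]
      _ = c * (1/3 : ℝ) := by norm_num
  have hsplit : besselJ k x = bT k x 0 + ∑' m, bT k x (m + 1) := by
    rw [besselJ_eq]
    exact Summable.tsum_eq_zero_add (bT_summable k x)
  rw [hsplit, hhead]
  have := abs_le.mp htsum_tail
  linarith
lemma lin_bound {A C u w M : ℝ} (hA0 : 0 ≤ A) (hAC : A ≤ C) (hu : |u| ≤ M) (hw : |w| ≤ M)
    (hM : 0 ≤ M) : |A * u - w| ≤ (C + 1) * M := by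
  have h1 : |A * u - w| ≤ |A * u| + |w| := abs_sub _ _
  rw [abs_mul, abs_of_nonneg hA0] at h1
  nlinarith [abs_nonneg u]

lemma no_common_zero (k : ℕ) {x0 : ℝ} (hx0 : 0 < x0)
    (hzk : besselJ k x0 = 0) (hzk1 : besselJ (k + 1) x0 = 0) : False := by
  have claim : ∀ t : ℝ, 0 < t → t ≤ x0 → besselJ k t = 0 := by
    intro ε hε hεx0
    set v : ℝ → ℝ × ℝ → ℝ × ℝ := fun t p =>
      (((k : ℝ) / max ε t) * p.1 - p.2, p.1 - (((k : ℝ) + 1) / max ε t) * p.2) with hv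
    set K : NNReal := ⟨((k : ℝ) + 1) / ε + 1, by positivity⟩ with hK
    have hKcoe : (K : ℝ) = ((k : ℝ) + 1) / ε + 1 := rfl
    have hlip : ∀ t : ℝ, LipschitzWith K (v t) := by
      intro t
      apply LipschitzWith.of_dist_le_mul
      intro p q
      have hmax : ε ≤ max ε t := le_max_left _ _
      have hc1 : (k : ℝ) / max ε t ≤ ((k : ℝ) + 1) / ε :=
        div_le_div₀ (by positivity) (by linarith) hε hmax
      have hc2 : ((k : ℝ) + 1) / max ε t ≤ ((k : ℝ) + 1) / ε :=
        div_le_div₀ (by positivity) (by linarith) hε hmax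
      have hc1' : (0:ℝ) ≤ (k : ℝ) / max ε t := by positivity
      have hc2' : (0:ℝ) ≤ ((k : ℝ) + 1) / max ε t := by positivity
      have hMnn : 0 ≤ dist p q := dist_nonneg
      have hu : |p.1 - q.1| ≤ dist p q := by
        rw [Prod.dist_eq, ← Real.dist_eq]; exact le_max_left _ _
      have hw : |p.2 - q.2| ≤ dist p q := by
        rw [Prod.dist_eq, ← Real.dist_eq]; exact le_max_right _ _
      rw [Prod.dist_eq]
      apply max_le
      · rw [Real.dist_eq]
        have e : (v t p).1 - (v t q).1
            = ((k : ℝ) / max ε t) * (p.1 - q.1) - (p.2 - q.2) := by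
          simp only [hv]; ring
        rw [e, hKcoe]
        exact lin_bound hc1' hc1 hu hw hMnn
      · rw [Real.dist_eq]
        have e : (v t p).2 - (v t q).2
            = (p.1 - q.1) - (((k : ℝ) + 1) / max ε t) * (p.2 - q.2) := by
          simp only [hv]; ring
        rw [e, hKcoe, abs_sub_comm]
        exact lin_bound hc2' hc2 hw hu hMnn
    set f : ℝ → ℝ × ℝ := fun t => (besselJ k t, besselJ (k + 1) t) with hf
    have hcont : ContinuousOn f (Icc ε x0) :=
      ((besselJ_continuous k).prodMk (besselJ_continuous (k + 1))).continuousOn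
    have hf' : ∀ t ∈ Ioc ε x0, HasDerivWithinAt f (v t (f t)) (Iic t) t := by
      intro t ht
      have htpos : 0 < t := lt_trans hε ht.1
      have hmaxt : max ε t = t := max_eq_right ht.1.le
      have hd : HasDerivAt f (bG k t, bG (k + 1) t) t :=
        (besselJ_hasDerivAt k t).prodMk (besselJ_hasDerivAt (k + 1) t)
      have heq : (bG k t, bG (k + 1) t) = v t (f t) := by
        simp only [hv, hf, hmaxt]
        exact Prod.ext (recur1 k htpos.ne') (recur2 k htpos.ne')
      rw [heq] at hd
      exact hd.hasDerivWithinAt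
    have hg' : ∀ t ∈ Ioc ε x0, HasDerivWithinAt (fun _ : ℝ => ((0:ℝ), (0:ℝ)))
        (v t ((0:ℝ), (0:ℝ))) (Iic t) t := by
      intro t ht
      have : v t ((0:ℝ), (0:ℝ)) = ((0:ℝ), (0:ℝ)) := by simp [hv]
      rw [this]
      exact (hasDerivAt_const t _).hasDerivWithinAt
    have huniq := ODE_solution_unique_of_mem_Icc_left (v := v) (s := fun _ => univ)
      (fun t _ => (hlip t).lipschitzOnWith) hcont hf' (fun _ _ => mem_univ _)
      continuousOn_const hg' (fun _ _ => mem_univ _)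
      (by simp only [hf]; rw [hzk, hzk1])
    have hmem : ε ∈ Icc ε x0 := ⟨le_refl _, hεx0⟩
    have := huniq hmem
    simpa [hf] using congrArg Prod.fst this
  have hmin : (0:ℝ) < min 1 x0 := lt_min one_pos hx0
  have h1 := besselJ_pos k hmin (min_le_left _ _)
  have h2 := claim (min 1 x0) hmin (min_le_right _ _)
  linarith
/-- `j n` (for `n ≥ 1`) enumerates, in increasing order, all the positive zeros of `J_k`. -/
def IsBesselZeros (k : ℕ) (j : ℕ → ℝ) : Prop :=
  (∀ n, 1 ≤ n → 0 < j n ∧ besselJ k (j n) = 0) ∧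
  (∀ n, 1 ≤ n → j n < j (n + 1)) ∧
  (∀ x, 0 < x → besselJ k x = 0 → ∃ n, 1 ≤ n ∧ j n = x)

/-- Characterization of the common positive roots (other than √κ) of `F_k` and `F_{k+1}`:
they are exactly the `α` such that `α` and `κ/α` are two distinct positive zeros of the
same Bessel function `J_k` or `J_{k+1}`. -/
theorem common_root_Fk_Fk1 (k : ℕ) (κ α : ℝ) (hκ : 0 < κ) (hα : 0 < α)
    (hne : α ≠ Real.sqrt κ)
    (jk jk1 : ℕ → ℝ) (h1 : IsBesselZeros k jk) (h2 : IsBesselZeros (k + 1) jk1) :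
    let F : ℕ → ℝ → ℝ := fun m a =>
      (κ / a) * besselJ m a * deriv (besselJ m) (κ / a)
        - a * besselJ m (κ / a) * deriv (besselJ m) a
    (F k α = 0 ∧ F (k + 1) α = 0) ↔
      ∃ m n : ℕ, 1 ≤ m ∧ 1 ≤ n ∧ m ≠ n ∧
        ((α = jk n ∧ κ / α = jk m) ∨ (α = jk1 n ∧ κ / α = jk1 m)) := by
  intro F
  set β : ℝ := κ / α with hβdef
  have hβ : 0 < β := div_pos hκ hα
  have hαβ : α ≠ β := by
    intro h
    apply hne
    have hκeq : κ = α * α := by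
      rw [hβdef, eq_div_iff hα.ne'] at h
      linarith [h]
    rw [hκeq, Real.sqrt_mul_self hα.le]
  set a := besselJ k α with ha
  set b := besselJ (k + 1) α with hb
  set c := besselJ k β with hc
  set d := besselJ (k + 1) β with hd
  have hFk : F k α = α * c * b - β * a * d := by
    show (κ / α) * besselJ k α * deriv (besselJ k) (κ / α)
        - α * besselJ k (κ / α) * deriv (besselJ k) α = _
    rw [deriv_besselJ1 k hβ.ne', deriv_besselJ1 k hα.ne', ← hβdef,
      ← ha, ← hb, ← hc, ← hd]
    field_simp
    ring
  have hFk1 : F (k + 1) α = β * b * c - α * a * d := by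
    show (κ / α) * besselJ (k + 1) α * deriv (besselJ (k + 1)) (κ / α)
        - α * besselJ (k + 1) (κ / α) * deriv (besselJ (k + 1)) α = _
    rw [deriv_besselJ2 k hβ.ne', deriv_besselJ2 k hα.ne', ← hβdef,
      ← ha, ← hb, ← hc, ← hd]
    field_simp
    ring
  constructor
  · rintro ⟨hE1, hE2⟩
    rw [hFk] at hE1
    rw [hFk1] at hE2
    have hsq : (α * α - β * β) * (b * c) = 0 := by linear_combination α * hE1 - β * hE2
    have hαβsq : α * α - β * β ≠ 0 := by
      intro h
      apply hαβ
      nlinarith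
    have hbc : b * c = 0 := by
      rcases mul_eq_zero.mp hsq with h | h
      · exact absurd h hαβsq
      · exact h
    have had : a * d = 0 := by
      rcases mul_eq_zero.mp hbc with hb0 | hc0
      · have : α * (a * d) = 0 := by linear_combination -hE2 + hb0 * β * c
        rcases mul_eq_zero.mp this with h | h
        · exact absurd h hα.ne'
        · exact h
      · have : β * (a * d) = 0 := by linear_combination -hE1 + hc0 * α * b
        rcases mul_eq_zero.mp this with h | h
        · exact absurd h hβ.ne'
        · exact h
    rcases mul_eq_zero.mp hbc with hb0 | hc0
    · rcases mul_eq_zero.mp had with ha0 | hd0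
      · exact (no_common_zero k hα ha0 hb0).elim
      · -- α and β are zeros of J_{k+1}
        obtain ⟨n, hn1, hn⟩ := h2.2.2 α hα hb0
        obtain ⟨m, hm1, hm⟩ := h2.2.2 β hβ hd0
        refine ⟨m, n, hm1, hn1, ?_, Or.inr ⟨hn.symm, hm.symm⟩⟩
        intro h
        apply hαβ
        rw [← hn, ← hm, h]
    · rcases mul_eq_zero.mp had with ha0 | hd0
      · -- α and β are zeros of J_k
        obtain ⟨n, hn1, hn⟩ := h1.2.2 α hα ha0
        obtain ⟨m, hm1, hm⟩ := h1.2.2 β hβ hc0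
        refine ⟨m, n, hm1, hn1, ?_, Or.inl ⟨hn.symm, hm.symm⟩⟩
        intro h
        apply hαβ
        rw [← hn, ← hm, h]
      · exact (no_common_zero k hβ hc0 hd0).elim
  · rintro ⟨m, n, hm1, hn1, hmn, hcase | hcase⟩
    · have ha0 : a = 0 := by
        have := (h1.1 n hn1).2; rw [← hcase.1] at this; exact this
      have hc0 : c = 0 := by
        have := (h1.1 m hm1).2; rw [← hcase.2] at this; exact this
      constructor
      · rw [hFk, ha0, hc0]; ring
      · rw [hFk1, ha0, hc0]; ring
    · have hb0 : b = 0 := by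
        have := (h2.1 n hn1).2; rw [← hcase.1] at this; exact this
      have hd0 : d = 0 := by
        have := (h2.1 m hm1).2; rw [← hcase.2] at this; exact this
      constructor
      · rw [hFk, hb0, hd0]; ring
      · rw [hFk1, hb0, hd0]; ring
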